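/- arXiv:1907.03201 — 4 statements merged into one kernel-verified Lean document; each statement's English description precedes it below -/
import Mathlib

section
/- Let c be a partial proper edge-coloring of a graph G with colors α ≠ β, let H be the subgraph of edges colored α or β, and let v be a vertex with α missing at v but β not missing at v. Then the component of H containing v is a path (not a cycle) having v as an endpoint. -/
open scoped Classical

/-- The spanning subgraph of edges of `G` colored `α` or `β` by `c`. -/
def twoColored {V : Type*} {N : ℕ} (G : SimpleGraph V) (c : Sym2 V → Option (Fin N))
    (α β : Fin N) : SimpleGraph V where
  Adj u w := G.Adj u w ∧ (c s(u, w) = some α ∨ c s(u, w) = some β)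
  symm := ⟨fun u w h => ⟨h.1.symm, by rw [Sym2.eq_swap]; exact h.2⟩⟩
  loopless := ⟨fun u h => G.loopless.irrefl u h.1⟩

/-- In a cycle, the base vertex has two distinct neighbors lying on the cycle. -/
lemma cycle_two_nbrs {V : Type*} {H : SimpleGraph V} {u : V} (q : H.Walk u u)
    (hq : q.IsCycle) :
    ∃ x y, x ≠ y ∧ H.Adj u x ∧ H.Adj u y ∧ x ∈ q.support ∧ y ∈ q.support := by
  have hn : ¬ q.Nil := hq.not_nil
  have hx : H.Adj u (q.getVert 1) := q.adj_snd hn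
  have hq2 := hq
  rw [← q.cons_tail_eq hn, SimpleGraph.Walk.cons_isCycle_iff] at hq2
  obtain ⟨hpath, hne⟩ := hq2
  set t := q.tail with ht_def
  have ht : ¬ t.Nil := SimpleGraph.Walk.not_nil_of_ne hx.ne'
  set r := t.reverse with hr_def
  have hr : ¬ r.Nil := SimpleGraph.Walk.not_nil_of_ne hx.ne
  have hy : H.Adj u (r.getVert 1) := r.adj_snd hr
  have hmem : s(u, r.getVert 1) ∈ r.edges := by
    conv_lhs => rw [← SimpleGraph.Walk.cons_tail_eq r hr]
    simp
  have hmem' : s(u, r.getVert 1) ∈ t.edges := by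
    rwa [hr_def, SimpleGraph.Walk.edges_reverse, List.mem_reverse] at hmem
  refine ⟨q.getVert 1, r.getVert 1, ?_, hx, hy, ?_, ?_⟩
  · rintro heq
    have hs : s(u, q.getVert 1) = s(u, r.getVert 1) := congrArg (fun z => s(u, z)) heq
    exact hne (hs ▸ hmem')
  · exact SimpleGraph.Walk.mem_support_iff_exists_getVert.2
      ⟨1, rfl, by have := hq.three_le_length; omega⟩
  · have hys : r.getVert 1 ∈ t.support :=
      t.snd_mem_support_of_mem_edges hmem'
    rw [ht_def, SimpleGraph.Walk.support_tail_of_not_nil q hn] at hys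
    exact List.mem_of_mem_tail hys

/-- If α is missing at v but β is not, then the component of v in the
αβ-subgraph is a path (it contains no cycle) having v as an endpoint (v has
exactly one incident αβ-edge). -/
theorem stmt_5 {V : Type*} {N : ℕ} (G : SimpleGraph V)
    (c : Sym2 V → Option (Fin N))
    (hproper : ∀ u v w : V, G.Adj u v → G.Adj u w → v ≠ w →
      ∀ γ, c s(u, v) = some γ → c s(u, w) ≠ some γ)
    (α β : Fin N) (hαβ : α ≠ β) (v : V)
    (hα : ∀ w, G.Adj v w → c s(v, w) ≠ some α)
    (hβ : ¬ ∀ w, G.Adj v w → c s(v, w) ≠ some β) :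
    {w | (twoColored G c α β).Adj v w}.ncard = 1 ∧
    ∀ w, (twoColored G c α β).Reachable v w →
      ∀ p : (twoColored G c α β).Walk w w, ¬ p.IsCycle := by
  classical
  set H := twoColored G c α β with hH
  push_neg at hβ
  obtain ⟨w₀, hw₀adj, hw₀β⟩ := hβ
  -- the H-neighbor set of v is exactly {w₀}
  have hset : {w | H.Adj v w} = {w₀} := by
    ext x
    simp only [Set.mem_setOf_eq, Set.mem_singleton_iff]
    constructor
    · rintro ⟨hadj, hcol⟩
      rcases hcol with hcol | hcol
      · exact absurd hcol (hα x hadj)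
      · by_contra hne
        exact hproper v x w₀ hadj hw₀adj hne β hcol hw₀β
    · rintro rfl
      exact ⟨hw₀adj, Or.inr hw₀β⟩
  -- any vertex has at most two H-neighbors
  have htwo : ∀ u x y z : V, H.Adj u x → H.Adj u y → H.Adj u z → x ≠ y →
      z = x ∨ z = y := by
    rintro u x y z ⟨hx, cx⟩ ⟨hy, cy⟩ ⟨hz, cz⟩ hxy
    by_contra hcon
    push_neg at hcon
    obtain ⟨hzx, hzy⟩ := hcon
    have key : ∀ a b : V, G.Adj u a → G.Adj u b → a ≠ b →
        c s(u, a) = c s(u, b) → (c s(u, a) = some α ∨ c s(u, a) = some β) → False := by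
      intro a b ha hb hab heq hor
      rcases hor with h | h
      · exact hproper u a b ha hb hab α h (heq ▸ h)
      · exact hproper u a b ha hb hab β h (heq ▸ h)
    rcases cx with cx | cx <;> rcases cy with cy | cy <;> rcases cz with cz | cz
    · exact key x y hx hy hxy (cx.trans cy.symm) (Or.inl cx)
    · exact key x y hx hy hxy (cx.trans cy.symm) (Or.inl cx)
    · exact key x z hx hz hzx.symm (cx.trans cz.symm) (Or.inl cx)
    · exact key y z hy hz hzy.symm (cy.trans cz.symm) (Or.inr cy)
    · exact key y z hy hz hzy.symm (cy.trans cz.symm) (Or.inl cy)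
    · exact key x z hx hz hzx.symm (cx.trans cz.symm) (Or.inr cx)
    · exact key x y hx hy hxy (cx.trans cy.symm) (Or.inr cx)
    · exact key x y hx hy hxy (cx.trans cy.symm) (Or.inr cx)
  refine ⟨by rw [hset]; exact Set.ncard_singleton w₀, ?_⟩
  rintro w hreach p hp
  -- support of p is closed under H-adjacency
  have hclosed : ∀ u z : V, u ∈ p.support → H.Adj u z → z ∈ p.support := by
    intro u z hu hz
    obtain ⟨x, y, hxy, hx, hy, hxs, hys⟩ := cycle_two_nbrs (p.rotate u hu) (hp.rotate hu)
    have hsupp : ∀ a, a ∈ (p.rotate u hu).support → a ∈ p.support := by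
      intro a ha
      have h1 : a ∈ (p.rotate u hu).toSubgraph.verts :=
        (SimpleGraph.Walk.mem_verts_toSubgraph _).2 ha
      rw [SimpleGraph.Walk.toSubgraph_rotate] at h1
      exact (SimpleGraph.Walk.mem_verts_toSubgraph _).1 h1
    rcases htwo u x y z hx hy hz hxy with rfl | rfl
    · exact hsupp _ hxs
    · exact hsupp _ hys
  -- hence v is on the cycle
  have hv : v ∈ p.support := by
    obtain ⟨W⟩ := hreach.symm
    have : ∀ (a b : V) (W : H.Walk a b), a ∈ p.support → b ∈ p.support := by
      intro a b W
      induction W with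
      | nil => exact id
      | cons h q ih => exact fun ha => ih (hclosed _ _ ha h)
    exact this w v W p.start_mem_support
  obtain ⟨x, y, hxy, hx, hy, _, _⟩ := cycle_two_nbrs (p.rotate v hv) (hp.rotate hv)
  have hx' : x = w₀ := by
    have : x ∈ {w | H.Adj v w} := hx
    rwa [hset] at this
  have hy' : y = w₀ := by
    have : y ∈ {w | H.Adj v w} := hy
    rwa [hset] at this
  exact hxy (hx'.trans hy'.symm)
end

section
/- Vizing's theorem: every finite simple graph with maximum degree d admits a proper edge-coloring using at most d+1 colors. -/
open Classical List
set_option linter.unusedSectionVars false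

namespace Vizing

variable {V : Type*} [Fintype V] [DecidableEq V] {G : SimpleGraph V} [DecidableRel G.Adj] {n : ℕ}

structure PC (G : SimpleGraph V) (n : ℕ) where
  f : V → V → Option (Fin n)
  symm : ∀ u v, f u v = f v u
  adj : ∀ u v, f u v ≠ none → G.Adj u v
  proper : ∀ u v w a, f u v = some a → f u w = some a → v = w

def free (C : PC G n) (v : V) (a : Fin n) : Prop := ∀ u, C.f v u ≠ some a

lemma exists_free (C : PC G n) (v : V) (h : G.degree v < n) : ∃ a, free C v a := by
  by_contra h'
  push_neg at h'
  have hg : ∀ a : Fin n, ∃ u, C.f v u = some a := by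
    intro a
    have := h' a
    unfold free at this
    push_neg at this
    exact this
  choose g hgu using hg
  have hinj : Function.Injective g := by
    intro a a' hh
    have h1 := hgu a
    have h2 := hgu a'
    rw [hh] at h1
    rw [h1] at h2
    exact Option.some.inj h2
  have hmem : ∀ a : Fin n, g a ∈ G.neighborFinset v := by
    intro a
    rw [SimpleGraph.mem_neighborFinset]
    exact C.adj v (g a) (by rw [hgu a]; simp)
  have := Finset.card_le_card_of_injOn (s := (Finset.univ : Finset (Fin n)))
    (t := G.neighborFinset v) g (fun a _ => hmem a) (Function.Injective.injOn hinj)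
  simp only [Finset.card_univ, Fintype.card_fin] at this
  rw [← SimpleGraph.degree] at this
  omega

/-- erase the color on edge x-z -/
def erase (C : PC G n) (x z : V) : PC G n where
  f u v := if (u = x ∧ v = z) ∨ (u = z ∧ v = x) then none else C.f u v
  symm u v := by
    have h : ((u = x ∧ v = z) ∨ (u = z ∧ v = x)) ↔ ((v = x ∧ u = z) ∨ (v = z ∧ u = x)) := by
      tauto
    simp only [h, C.symm u v]
  adj u v h := by
    by_cases hc : (u = x ∧ v = z) ∨ (u = z ∧ v = x)
    · simp [hc] at h
    · exact C.adj u v (by simpa [hc] using h)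
  proper u v w a h1 h2 := by
    by_cases hc : (u = x ∧ v = z) ∨ (u = z ∧ v = x)
    · simp [hc] at h1
    · by_cases hc2 : (u = x ∧ w = z) ∨ (u = z ∧ w = x)
      · simp [hc2] at h2
      · exact C.proper u v w a (by simpa [hc] using h1) (by simpa [hc2] using h2)

lemma erase_eq (C : PC G n) (x z u v : V) (h : ¬((u = x ∧ v = z) ∨ (u = z ∧ v = x))) :
    (erase C x z).f u v = C.f u v := by simp [erase, h]

lemma erase_none (C : PC G n) (x z : V) : (erase C x z).f x z = none := by simp [erase]

lemma erase_le (C : PC G n) (x z u v : V) {a} (h : (erase C x z).f u v = some a) :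
    C.f u v = some a := by
  by_cases hc : (u = x ∧ v = z) ∨ (u = z ∧ v = x) <;> simp [erase, hc] at h <;> exact h

lemma free_erase (C : PC G n) (x z : V) {v a} (h : free C v a) : free (erase C x z) v a := by
  intro u hu
  exact h u (erase_le C x z v u hu)

/-- set the color on edge x-y to a -/
def setc (C : PC G n) (x y : V) (a : Fin n) (hxy : G.Adj x y) (hx : free C x a)
    (hy : free C y a) : PC G n where
  f u v := if (u = x ∧ v = y) ∨ (u = y ∧ v = x) then some a else C.f u v
  symm u v := by
    have h : ((u = x ∧ v = y) ∨ (u = y ∧ v = x)) ↔ ((v = x ∧ u = y) ∨ (v = y ∧ u = x)) := by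
      tauto
    simp only [h, C.symm u v]
  adj u v h := by
    by_cases hc : (u = x ∧ v = y) ∨ (u = y ∧ v = x)
    · rcases hc with ⟨h1, h2⟩ | ⟨h1, h2⟩
      · subst h1; subst h2; exact hxy
      · subst h1; subst h2; exact hxy.symm
    · exact C.adj u v (by simpa [hc] using h)
  proper u v w e h1 h2 := by
    have hne : x ≠ y := hxy.ne
    by_cases hc : (u = x ∧ v = y) ∨ (u = y ∧ v = x) <;>
      by_cases hc2 : (u = x ∧ w = y) ∨ (u = y ∧ w = x)
    · rcases hc with ⟨hu, hv⟩ | ⟨hu, hv⟩ <;> rcases hc2 with ⟨hu2, hw⟩ | ⟨hu2, hw⟩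
      · rw [hv, hw]
      · rw [hu] at hu2; exact absurd hu2 hne
      · rw [hu] at hu2; exact absurd hu2 hne.symm
      · rw [hv, hw]
    · rw [if_pos hc] at h1
      rw [if_neg hc2] at h2
      have hae := Option.some.inj h1
      subst hae
      rcases hc with ⟨hu, hv⟩ | ⟨hu, hv⟩ <;> subst hu
      · exact absurd h2 (hx w)
      · exact absurd h2 (hy w)
    · rw [if_neg hc] at h1
      rw [if_pos hc2] at h2
      have hae := Option.some.inj h2
      subst hae
      rcases hc2 with ⟨hu, hw⟩ | ⟨hu, hw⟩ <;> subst hu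
      · exact absurd h1 (hx v)
      · exact absurd h1 (hy v)
    · rw [if_neg hc] at h1
      rw [if_neg hc2] at h2
      exact C.proper u v w e h1 h2

lemma setc_eq (C : PC G n) (x y : V) (a : Fin n) (h1 h2 h3) (u v : V)
    (h : ¬((u = x ∧ v = y) ∨ (u = y ∧ v = x))) :
    (setc C x y a h1 h2 h3).f u v = C.f u v := by simp [setc, h]

lemma setc_self (C : PC G n) (x y : V) (a : Fin n) (h1 h2 h3) :
    (setc C x y a h1 h2 h3).f x y = some a := by simp [setc]

/-! ### Inversion of colors c,b on a closed set S -/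

def sw (c b : Fin n) (o : Option (Fin n)) : Option (Fin n) :=
  if o = some c then some b else if o = some b then some c else o

def swc (c b a : Fin n) : Fin n := if a = c then b else if a = b then c else a

lemma sw_none (c b : Fin n) (o : Option (Fin n)) : sw c b o = none ↔ o = none := by
  unfold sw
  split_ifs with h1 h2 <;> simp_all

lemma swc_swc (c b : Fin n) (hcb : c ≠ b) (a : Fin n) : swc c b (swc c b a) = a := by
  unfold swc
  split_ifs <;> simp_all

lemma sw_some (c b : Fin n) (hcb : c ≠ b) (a : Fin n) :
    sw c b (some a) = some (swc c b a) := by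
  unfold sw swc
  split_ifs <;> simp_all

lemma sw_eq_some (c b : Fin n) (hcb : c ≠ b) (o : Option (Fin n)) (e : Fin n) :
    sw c b o = some e ↔ o = some (swc c b e) := by
  cases o with
  | none => simp [sw]
  | some a' =>
    rw [sw_some c b hcb]
    simp only [Option.some.injEq]
    constructor
    · intro h
      rw [← h, swc_swc c b hcb]
    · intro h
      rw [h, swc_swc c b hcb]

lemma sw_inj (c b : Fin n) : Function.Injective (sw c b) := by
  intro o o' h
  unfold sw at h
  split_ifs at h with h1 h2 h3 h4 h5 h6 h7 <;> simp_all

variable (S : Set V)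

noncomputable def invert (C : PC G n) (c b : Fin n) (S : Set V)
    (hS : ∀ u v, u ∈ S → (C.f u v = some c ∨ C.f u v = some b) → v ∈ S) : PC G n where
  f u v := if u ∈ S ∧ v ∈ S then sw c b (C.f u v) else C.f u v
  symm u v := by
    have h : (u ∈ S ∧ v ∈ S) ↔ (v ∈ S ∧ u ∈ S) := And.comm
    simp only [h, C.symm u v]
  adj u v h := by
    apply C.adj u v
    by_cases hc : u ∈ S ∧ v ∈ S
    · simp only [hc, if_true] at h
      intro hn
      rw [hn] at h
      simp [sw] at h
    · simpa [hc] using h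
  proper u v w e h1 h2 := by
    by_cases hu : u ∈ S
    · have key : ∀ z, (if u ∈ S ∧ z ∈ S then sw c b (C.f u z) else C.f u z) = sw c b (C.f u z) := by
        intro z
        by_cases hz : z ∈ S
        · simp [hu, hz]
        · rw [if_neg (fun hh => hz hh.2)]
          have : ¬(C.f u z = some c ∨ C.f u z = some b) := fun hh => hz (hS u z hu hh)
          push_neg at this
          unfold sw
          rw [if_neg this.1, if_neg this.2]
      rw [key v] at h1
      rw [key w] at h2
      have heq : C.f u v = C.f u w := sw_inj c b (h1.trans h2.symm)
      have hnn : C.f u v ≠ none := by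
        intro hn
        rw [hn] at h1
        simp [sw] at h1
      obtain ⟨a, ha⟩ := Option.ne_none_iff_exists'.mp hnn
      exact C.proper u v w a ha (heq ▸ ha)
    · rw [if_neg (fun hh => hu hh.1)] at h1
      rw [if_neg (fun hh => hu hh.1)] at h2
      exact C.proper u v w e h1 h2

lemma invert_not_mem (C : PC G n) (c b : Fin n) (S : Set V) (hS) {u : V} (v : V) (hu : u ∉ S) :
    (invert C c b S hS).f u v = C.f u v := by
  simp only [invert]
  rw [if_neg (fun hh => hu hh.1)]

lemma invert_mem (C : PC G n) (c b : Fin n) (S : Set V) (hS) {u : V} (v : V) (hu : u ∈ S) :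
    (invert C c b S hS).f u v = sw c b (C.f u v) := by
  simp only [invert]
  by_cases hz : v ∈ S
  · simp [hu, hz]
  · rw [if_neg (fun hh => hz hh.2)]
    have : ¬(C.f u v = some c ∨ C.f u v = some b) := fun hh => hz (hS u v hu hh)
    push_neg at this
    unfold sw
    rw [if_neg this.1, if_neg this.2]

lemma invert_none (C : PC G n) (c b : Fin n) (S : Set V) (hS) (u v : V) :
    (invert C c b S hS).f u v = none ↔ C.f u v = none := by
  by_cases hu : u ∈ S
  · rw [invert_mem C c b S hS v hu, sw_none]
  · rw [invert_not_mem C c b S hS v hu]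

lemma invert_free_not_mem (C : PC G n) (c b : Fin n) (S : Set V) (hS) {u : V} (a : Fin n)
    (hu : u ∉ S) : free (invert C c b S hS) u a ↔ free C u a := by
  unfold free
  constructor <;> intro h w hw
  · exact h w (by rwa [invert_not_mem C c b S hS w hu])
  · exact h w (by rwa [invert_not_mem C c b S hS w hu] at hw)

lemma invert_free_mem (C : PC G n) (c b : Fin n) (S : Set V) (hS) (hcb : c ≠ b) {u : V}
    (a : Fin n) (hu : u ∈ S) : free (invert C c b S hS) u a ↔ free C u (swc c b a) := by
  unfold free
  constructor <;> intro h w hw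
  · exact h w (by rw [invert_mem C c b S hS w hu, sw_eq_some c b hcb]; exact hw)
  · rw [invert_mem C c b S hS w hu, sw_eq_some c b hcb] at hw
    exact h w hw

lemma swc_c (c b : Fin n) : swc c b c = b := by simp [swc]

lemma swc_b (c b : Fin n) (hcb : c ≠ b) : swc c b b = c := by
  unfold swc
  rw [if_neg (Ne.symm hcb), if_pos rfl]

lemma swc_other (c b a : Fin n) (h1 : a ≠ c) (h2 : a ≠ b) : swc c b a = a := by
  simp [swc, h1, h2]


/-! ### Fans and rotation -/

theorem chain_cons' {α : Type*} {r : α → α → Prop} {a b : α} {l : List α} :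
    List.Chain r a (b :: l) ↔ r a b ∧ List.Chain r b l := List.isChain_cons_cons

theorem chain_split' {α : Type*} {r : α → α → Prop} {a c : α} {l₁ l₂ : List α} :
    List.Chain r a (l₁ ++ c :: l₂) ↔ List.Chain r a (l₁ ++ [c]) ∧ List.Chain r c l₂ :=
  List.isChain_cons_split

def fanRel (C : PC G n) (x : V) (u v : V) : Prop :=
  G.Adj x v ∧ ∃ a, C.f x v = some a ∧ free C u a

lemma chain_transfer {α : Type*} (r r' : α → α → Prop) :
    ∀ (y : α) (l : List α), List.Chain r y l →
      (∀ u v, u ∈ y :: l → v ∈ l → r u v → r' u v) → List.Chain r' y l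
  | _, [], _, _ => List.Chain.nil
  | y, z :: t, h, htr => by
    rw [chain_cons'] at h
    exact List.Chain.cons (htr y z (by simp) (by simp) h.1)
      (chain_transfer r r' z t h.2 (fun u v hu hv hr =>
        htr u v (by simp at hu ⊢; tauto) (by simp [hv]) hr))

lemma chain_concat {α : Type*} (r : α → α → Prop) :
    ∀ (t : List α) (y z : α), List.Chain r y t →
      r ((y :: t).getLast (List.cons_ne_nil y t)) z → List.Chain r y (t ++ [z])
  | [], y, z, _, hr => List.Chain.cons hr List.Chain.nil
  | w :: t', y, z, h, hr => by
    rw [chain_cons'] at h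
    refine List.Chain.cons h.1 (chain_concat r t' w z h.2 ?_)
    rwa [List.getLast_cons (List.cons_ne_nil w t')] at hr

lemma chain_adj {C : PC G n} {x : V} :
    ∀ {y : V} {t : List V}, List.Chain (fanRel C x) y t → ∀ v ∈ t, G.Adj x v := by
  intro y t h v hv
  induction t generalizing y with
  | nil => simp at hv
  | cons w t' ih =>
    rw [chain_cons'] at h
    rcases List.mem_cons.mp hv with rfl | hv'
    · exact h.1.1
    · exact ih h.2 hv'

/-- The key rotation lemma: shift the colors along a fan, leaving the last edge uncolored. -/
lemma rotate (x : V) : ∀ (t : List V) (C : PC G n) (y : V),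
    C.f x y = none → G.Adj x y → List.Chain (fanRel C x) y t → (y :: t).Nodup →
    ∃ C' : PC G n,
      (∀ u v, u ≠ x → v ≠ x → C'.f u v = C.f u v) ∧
      (∀ z, z ∉ y :: t → C'.f x z = C.f x z) ∧
      C'.f x ((y :: t).getLast (List.cons_ne_nil y t)) = none ∧
      (∀ z ∈ y :: t, z ≠ (y :: t).getLast (List.cons_ne_nil y t) → C'.f x z ≠ none) ∧
      (∀ b, free C x b → free C' x b) ∧
      (∀ b, free C ((y :: t).getLast (List.cons_ne_nil y t)) b →
        free C' ((y :: t).getLast (List.cons_ne_nil y t)) b) := by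
  intro t
  induction t with
  | nil =>
    intro C y h1 h2 _ _
    exact ⟨C, fun _ _ _ _ => rfl, fun _ _ => rfl, h1,
      fun z hz hne => absurd (List.mem_singleton.mp hz) hne, fun _ h => h, fun _ h => h⟩
  | cons z t' ih =>
    intro C y h1 h2 h3 h4
    rw [chain_cons'] at h3
    obtain ⟨⟨hxz, a, hxza, hfya⟩, hchain⟩ := h3
    have hxy : x ≠ y := h2.ne
    have hxz' : x ≠ z := hxz.ne
    have hyz : y ∉ z :: t' := (List.nodup_cons.mp h4).1
    have hynz : y ≠ z := fun h => hyz (h ▸ List.mem_cons_self (a := z) (l := t'))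
    have hnd' : (z :: t').Nodup := (List.nodup_cons.mp h4).2
    -- C₁ : erase x-z, set x-y to a
    have hfxa : free (erase C x z) x a := by
      intro u hu
      have hu' := erase_le C x z x u hu
      have := C.proper x u z a hu' hxza
      subst this
      rw [erase_none] at hu
      exact (nomatch hu)
    have hfya' : free (erase C x z) y a := free_erase C x z hfya
    set C₁ := setc (erase C x z) x y a h2 hfxa hfya' with hC₁
    have hC₁xz : C₁.f x z = none := by
      rw [hC₁, setc_eq _ _ _ _ _ _ _ x z (by tauto), erase_none]
    have hC₁xy : C₁.f x y = some a := setc_self _ _ _ _ _ _ _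
    have hC₁off : ∀ u v, u ≠ x → v ≠ x → C₁.f u v = C.f u v := by
      intro u v hu hv
      rw [hC₁, setc_eq _ _ _ _ _ _ _ u v (by tauto), erase_eq _ _ _ _ _ (by tauto)]
    have hC₁x : ∀ w, w ≠ y → w ≠ z → C₁.f x w = C.f x w := by
      intro w hw1 hw2
      rw [hC₁, setc_eq _ _ _ _ _ _ _ x w (by tauto), erase_eq _ _ _ _ _ (by tauto)]
    -- freeness transfer from C to C₁ for vertices other than y
    have htrans : ∀ u b, u ≠ y → free C u b → free C₁ u b := by
      intro u b hu hfree w hw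
      by_cases hux : u = x
      · subst hux
        by_cases hwy : w = y
        · subst hwy
          rw [hC₁xy] at hw
          have hab : a = b := Option.some.inj hw
          exact hfree z (hab ▸ hxza)
        · by_cases hwz : w = z
          · subst hwz; rw [hC₁xz] at hw; exact nomatch hw
          · rw [hC₁x w hwy hwz] at hw; exact hfree w hw
      · by_cases hc : (u = z ∧ w = x)
        · rw [hC₁, setc_eq _ _ _ _ _ _ _ u w (by tauto)] at hw
          simp only [erase, if_pos (Or.inr hc)] at hw
          exact nomatch hw
        · rw [hC₁, setc_eq _ _ _ _ _ _ _ u w (by tauto),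
            erase_eq _ _ _ _ _ (by tauto)] at hw
          exact hfree w hw
    -- the tail is a fan for C₁
    have hchain' : List.Chain (fanRel C₁ x) z t' := by
      apply chain_transfer _ _ _ _ hchain
      intro u v hu hv ⟨hadj, a', ha', hf'⟩
      have hvy : v ≠ y := fun h => hyz (h ▸ List.mem_cons_of_mem z hv)
      have hvz : v ≠ z := fun h => (List.nodup_cons.mp hnd').1 (h ▸ hv)
      have huy : u ≠ y := fun h => hyz (h ▸ hu)
      exact ⟨hadj, a', by rw [hC₁x v hvy hvz]; exact ha', htrans u a' huy hf'⟩
    obtain ⟨C', hp1, hp2, hp3, hp4, hp5, hp6⟩ := ih C₁ z hC₁xz hxz hchain' hnd'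
    have hlast : (y :: z :: t').getLast (List.cons_ne_nil _ _) =
        (z :: t').getLast (List.cons_ne_nil _ _) := List.getLast_cons (List.cons_ne_nil _ _)
    have hlast_mem : (z :: t').getLast (List.cons_ne_nil _ _) ∈ z :: t' := List.getLast_mem _
    have hlast_ny : (z :: t').getLast (List.cons_ne_nil _ _) ≠ y :=
      fun h => hyz (h ▸ hlast_mem)
    refine ⟨C', ?_, ?_, ?_, ?_, ?_, ?_⟩
    · intro u v hu hv
      rw [hp1 u v hu hv, hC₁off u v hu hv]
    · intro w hw
      have hw1 : w ∉ z :: t' := fun h => hw (List.mem_cons_of_mem y h)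
      have hwy : w ≠ y := fun h => hw (h ▸ List.mem_cons_self (a := y) (l := _))
      have hwz : w ≠ z := fun h => hw1 (h ▸ List.mem_cons_self (a := z) (l := t'))
      rw [hp2 w hw1, hC₁x w hwy hwz]
    · rw [hlast]; exact hp3
    · intro w hwmem hwne
      rw [hlast] at hwne
      rcases List.mem_cons.mp hwmem with rfl | hw'
      · rw [hp2 w hyz, hC₁xy]; exact fun h => nomatch h
      · exact hp4 w hw' hwne
    · intro b hb
      exact hp5 b (htrans x b hxy hb)
    · rw [hlast]
      intro b hb
      exact hp6 b (htrans _ b hlast_ny hb)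

/-! ### Components of max-degree-2 graphs cannot contain three leaves -/

lemma excise {r : V → V → Prop} (hsym : Symmetric r) (hirr : ∀ v, ¬ r v v) {a w : V}
    (huniq : ∀ p q, r a p → r a q → p = q) (haw : r a w) {v : V} (hv : v ≠ a) :
    ∀ u, Relation.ReflTransGen r u v →
      ((u = a → Relation.ReflTransGen (fun p q => r p q ∧ p ≠ a ∧ q ≠ a) w v) ∧
       (u ≠ a → Relation.ReflTransGen (fun p q => r p q ∧ p ≠ a ∧ q ≠ a) u v)) := by
  intro u hu
  induction hu using Relation.ReflTransGen.head_induction_on with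
  | refl => exact ⟨fun h => absurd h hv, fun _ => Relation.ReflTransGen.refl⟩
  | head h' h ih =>
    rename_i p q
    constructor
    · intro hpa
      subst hpa
      have hqw : q = w := huniq q w h' haw
      subst hqw
      exact ih.2 (fun hq => hirr p (hq ▸ h'))
    · intro hpa
      by_cases hqa : q = a
      · subst hqa
        have hpw : p = w := huniq p w (hsym h') haw
        subst hpw
        exact ih.1 rfl
      · exact Relation.ReflTransGen.head ⟨h', hpa, hqa⟩ (ih.2 hqa)

lemma three_leaves : ∀ (N : ℕ) (r : V → V → Prop),
    {q : V × V | r q.1 q.2}.ncard ≤ N →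
    Symmetric r → (∀ v, ¬ r v v) →
    (∀ v p q s, r v p → r v q → r v s → p = q ∨ p = s ∨ q = s) →
    ∀ u₁ u₂ u₃ : V, u₁ ≠ u₂ → u₁ ≠ u₃ → u₂ ≠ u₃ →
    (∀ p q, r u₁ p → r u₁ q → p = q) →
    (∀ p q, r u₂ p → r u₂ q → p = q) →
    (∀ p q, r u₃ p → r u₃ q → p = q) →
    Relation.ReflTransGen r u₁ u₂ → Relation.ReflTransGen r u₁ u₃ → False := by
  intro N
  induction N with
  | zero =>
    intro r hcard hsym hirr hdeg2 u₁ u₂ u₃ h12 h13 h23 hl1 hl2 hl3 hr2 hr3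
    rcases hr2.cases_head with h | ⟨w, hw, _⟩
    · exact h12 h
    · have hne : {q : V × V | r q.1 q.2}.Nonempty := ⟨(u₁, w), hw⟩
      have := (Set.ncard_pos (Set.toFinite _)).mpr hne
      omega
  | succ N ih =>
    intro r hcard hsym hirr hdeg2 u₁ u₂ u₃ h12 h13 h23 hl1 hl2 hl3 hr2 hr3
    rcases hr2.cases_head with h | ⟨w, hw, hw2⟩
    · exact h12 h
    have hwne : w ≠ u₁ := fun h => hirr u₁ (h ▸ hw)
    set r' := fun p q => r p q ∧ p ≠ u₁ ∧ q ≠ u₁ with hr'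
    have hrw2 : Relation.ReflTransGen r' w u₂ :=
      (excise hsym hirr hl1 hw (Ne.symm h12) w hw2).2 hwne
    have hrw3 : Relation.ReflTransGen r' w u₃ := by
      rcases hr3.cases_head with h | ⟨w', hw', hw3⟩
      · exact absurd h h13
      · exact (excise hsym hirr hl1 hw (Ne.symm h13) w
          ((hl1 w' w hw' hw) ▸ hw3)).2 hwne
    have hsym' : Symmetric r' := fun p q h => ⟨hsym h.1, h.2.2, h.2.1⟩
    have hirr' : ∀ v, ¬ r' v v := fun v h => hirr v h.1
    have hisol : ∀ z, r z u₁ → (∀ p q, r z p → r z q → p = q) → ∀ q, ¬ r' z q := by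
      intro z hz hzuniq q hq
      exact hq.2.2 (hzuniq q u₁ hq.1 hz)
    by_cases hw2' : w = u₂
    · subst hw2'
      rcases hrw3.cases_head with h | ⟨q, hq, _⟩
      · exact h23 h
      · exact hisol w (hsym hw) hl2 q hq
    by_cases hw3' : w = u₃
    · subst hw3'
      rcases hrw2.cases_head with h | ⟨q, hq, _⟩
      · exact h23 h.symm
      · exact hisol w (hsym hw) hl3 q hq
    have hsub : {q : V × V | r' q.1 q.2}.ncard ≤ N := by
      have hss : {q : V × V | r' q.1 q.2} ⊂ {q : V × V | r q.1 q.2} := by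
        constructor
        · intro q hq
          exact hq.1
        · intro hsub'
          have : (u₁, w) ∈ {q : V × V | r' q.1 q.2} := hsub' hw
          exact this.2.1 rfl
      have := Set.ncard_lt_ncard hss (Set.toFinite _)
      omega
    refine ih r' hsub hsym' hirr' ?_ w u₂ u₃ hw2' hw3' h23 ?_ ?_ ?_ hrw2 hrw3
    · intro v p q s hp hq hs
      exact hdeg2 v p q s hp.1 hq.1 hs.1
    · intro p q hp hq
      rcases hdeg2 w u₁ p q (hsym hw) hp.1 hq.1 with h | h | h
      · exact absurd h.symm hp.2.2
      · exact absurd h.symm hq.2.2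
      · exact h
    · intro p q hp hq
      exact hl2 p q hp.1 hq.1
    · intro p q hp hq
      exact hl3 p q hp.1 hq.1

/-! ### Finishing: rotate a fan and color the last edge -/

lemma sw_fixed (c b : Fin n) (a : Fin n) (h1 : a ≠ c) (h2 : a ≠ b) :
    sw c b (some a) = some a := by
  unfold sw
  rw [if_neg (by simpa using h1), if_neg (by simpa using h2)]

lemma finishRotate (C : PC G n) (x y : V) (t : List V) (h1 : C.f x y = none)
    (h2 : G.Adj x y) (h3 : List.Chain (fanRel C x) y t) (h4 : (y :: t).Nodup) (b : Fin n)
    (hbx : free C x b) (hbt : free C ((y :: t).getLast (List.cons_ne_nil y t)) b) :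
    ∃ C' : PC G n, (∀ u v, C.f u v ≠ none → C'.f u v ≠ none) ∧ C'.f x y ≠ none := by
  set t0 := (y :: t).getLast (List.cons_ne_nil y t) with ht0
  have ht0mem : t0 ∈ y :: t := List.getLast_mem _
  have hadj_t0 : G.Adj x t0 := by
    rcases List.mem_cons.mp ht0mem with h | h
    · exact h ▸ h2
    · exact chain_adj h3 t0 h
  obtain ⟨C₂, hp1, hp2, hp3, hp4, hp5, hp6⟩ := rotate x t C y h1 h2 h3 h4
  set C₃ := setc C₂ x t0 b hadj_t0 (hp5 b hbx) (hp6 b hbt) with hC₃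
  have hxt0 : x ≠ t0 := hadj_t0.ne
  have haux : ∀ v, v ≠ x → (v ∈ y :: t ∨ C.f x v ≠ none) → C₃.f x v ≠ none := by
    intro v hv hne
    by_cases hvt0 : v = t0
    · subst hvt0
      rw [hC₃, setc_self]
      exact fun h => nomatch h
    · rw [hC₃, setc_eq _ _ _ _ _ _ _ x v (by tauto)]
      by_cases hvm : v ∈ y :: t
      · exact hp4 v hvm hvt0
      · rw [hp2 v (by tauto)]
        rcases hne with hne | hne
        · exact absurd hne hvm
        · exact hne
  refine ⟨C₃, ?_, ?_⟩
  · intro u v hne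
    by_cases hu : u = x
    · rw [hu]
      rw [hu] at hne
      by_cases hv : v = x
      · rw [hv] at hne
        exact absurd (C.adj x x hne) (G.loopless.irrefl x)
      · exact haux v hv (Or.inr hne)
    · by_cases hv : v = x
      · rw [hv]
        rw [hv] at hne
        rw [C₃.symm]
        rw [C.symm] at hne
        exact haux u hu (Or.inr hne)
      · rw [hC₃, setc_eq _ _ _ _ _ _ _ u v (by tauto), hp1 u v hu hv]
        exact hne
  · exact haux y h2.ne.symm (Or.inl (List.mem_cons_self (a := y) (l := t)))

lemma split_prev {α : Type*} : ∀ (t : List α) (y z : α), z ∈ t →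
    ∃ t₁ l2, y :: t = (y :: t₁) ++ z :: l2
  | w :: t', y, z, hz => by
    rcases List.mem_cons.mp hz with rfl | hz'
    · exact ⟨[], t', rfl⟩
    · obtain ⟨t₁', l2, heq⟩ := split_prev t' w z hz'
      exact ⟨w :: t₁', l2, by rw [List.cons_append, ← heq]⟩

lemma chain_unconcat {α : Type*} (r : α → α → Prop) :
    ∀ (t₁ : List α) (y z : α), List.Chain r y (t₁ ++ [z]) →
      List.Chain r y t₁ ∧ r ((y :: t₁).getLast (List.cons_ne_nil y t₁)) z
  | [], y, z, h => ⟨List.Chain.nil, (List.chain_cons.mp h).1⟩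
  | w :: t', y, z, h => by
    rw [List.cons_append, chain_cons'] at h
    obtain ⟨h1, h2⟩ := chain_unconcat r t' w z h.2
    exact ⟨List.Chain.cons h.1 h1, by rwa [List.getLast_cons (List.cons_ne_nil w t')]⟩

/-! ### The main construction: extending a partial coloring to one more edge -/

lemma getLast_congr {α : Type*} (L M : List α) (hL : L ≠ []) (hM : M ≠ []) (h : L = M) :
    L.getLast hL = M.getLast hM := by subst h; rfl

lemma build (hdeg : ∀ v, G.degree v < n) (x : V) : ∀ (k : ℕ) (C : PC G n) (y : V) (t : List V),
    C.f x y = none → G.Adj x y → List.Chain (fanRel C x) y t → (y :: t).Nodup →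
    Fintype.card V < k + (y :: t).length →
    ∃ C' : PC G n, (∀ u v, C.f u v ≠ none → C'.f u v ≠ none) ∧ C'.f x y ≠ none := by
  intro k
  induction k with
  | zero =>
    intro C y t _ _ _ h4 hlen
    have := h4.length_le_card
    omega
  | succ k ih =>
    intro C y t h1 h2 h3 h4 hlen
    set t0 := (y :: t).getLast (List.cons_ne_nil y t) with ht0
    have hadj_all : ∀ v ∈ y :: t, G.Adj x v := by
      intro v hv
      rcases List.mem_cons.mp hv with rfl | hv'
      · exact h2
      · exact chain_adj h3 v hv'
    have ht0mem : t0 ∈ y :: t := List.getLast_mem _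
    obtain ⟨b, hb⟩ := exists_free C t0 (hdeg t0)
    by_cases hbx : free C x b
    · exact finishRotate C x y t h1 h2 h3 h4 b hbx hb
    · have hz' : ∃ z, C.f x z = some b := by
        unfold free at hbx
        push_neg at hbx
        exact hbx
      obtain ⟨z, hz⟩ := hz'
      have hadjxz : G.Adj x z := C.adj x z (by rw [hz]; exact fun h => nomatch h)
      by_cases hzmem : z ∈ y :: t
      · -- z is already in the fan: Kempe chain argument
        have hzy : z ≠ y := by
          intro h
          rw [h, h1] at hz
          exact nomatch hz
        obtain ⟨t₁, l2, hsplit⟩ := split_prev t y z (by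
          rcases List.mem_cons.mp hzmem with h | h
          · exact absurd h hzy
          · exact h)
        have hteq : t = t₁ ++ z :: l2 := by
          have h := hsplit
          rw [List.cons_append] at h
          injection h with h' h''
        set p := (y :: t₁).getLast (List.cons_ne_nil y t₁) with hp
        have hpmem : p ∈ y :: t₁ := List.getLast_mem _
        have hchains : List.Chain (fanRel C x) y (t₁ ++ [z]) ∧
            List.Chain (fanRel C x) z l2 := by
          rw [hteq] at h3
          exact chain_split'.mp h3
        obtain ⟨hchain₁, hfan_pz⟩ := chain_unconcat _ t₁ y z hchains.1
        have hchain₂ := hchains.2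
        -- b is free at p
        obtain ⟨hadjz, a, ha, hfpa⟩ := hfan_pz
        have hab : a = b := by
          rw [ha] at hz
          exact Option.some.inj hz
        have hfpb : free C p b := hab ▸ hfpa
        -- c : a color free at x
        obtain ⟨c, hc⟩ := exists_free C x (hdeg x)
        have hcb : c ≠ b := fun h => hbx (h ▸ hc)
        -- the Kempe relation and component of t0
        set r : V → V → Prop := fun u v => C.f u v = some c ∨ C.f u v = some b with hr
        have hsymr : Symmetric r := by
          intro u v h
          have h' : C.f u v = some c ∨ C.f u v = some b := h
          show C.f v u = some c ∨ C.f v u = some b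
          rwa [C.symm v u]
        have hirr : ∀ v, ¬ r v v := by
          intro v h
          have : C.f v v ≠ none := by
            rcases h with h | h <;> rw [h] <;> exact fun hh => nomatch hh
          exact (G.loopless.irrefl v) (C.adj v v this)
        set S : Set V := {w | Relation.ReflTransGen r t0 w} with hSdef
        have hS : ∀ u v, u ∈ S → (C.f u v = some c ∨ C.f u v = some b) → v ∈ S :=
          fun u v hu hr' => Relation.ReflTransGen.tail hu hr'
        set C₁ := invert C c b S hS with hC₁
        have ht0S : t0 ∈ S := Relation.ReflTransGen.refl
        have hC₁xy : C₁.f x y = none := (invert_none C c b S hS x y).mpr h1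
        have hdom : ∀ u v, C.f u v ≠ none → C₁.f u v ≠ none := by
          intro u v hne h
          exact hne ((invert_none C c b S hS u v).mp h)
        -- membership facts
        have hmem_t₁ : ∀ v ∈ y :: t₁, v ∈ y :: t := by
          intro v hv
          rw [hsplit]
          exact List.mem_append_left _ hv
        have hnodup_split : ((y :: t₁) ++ z :: l2).Nodup := hsplit ▸ h4
        have hnd₁ : (y :: t₁).Nodup := (List.nodup_append.mp hnodup_split).1
        have hnd₂ : (z :: l2).Nodup := (List.nodup_append.mp hnodup_split).2.1
        have hdisj : (y :: t₁).Disjoint (z :: l2) := (List.nodup_append'.mp hnodup_split).2.2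
        have hznt₁ : z ∉ y :: t₁ := fun h => hdisj h (List.mem_cons_self (a := z) (l := l2))
        -- distinctness
        have hxt0 : x ≠ t0 := (hadj_all t0 ht0mem).ne
        have hadjxp : G.Adj x p := hadj_all p (hmem_t₁ p hpmem)
        have hxp : x ≠ p := hadjxp.ne
        have ht0z : t0 ∈ z :: l2 := by
          have he : t0 = (z :: l2).getLast (List.cons_ne_nil z l2) := by
            rw [ht0, getLast_congr _ _ (List.cons_ne_nil y t) (by simp) hsplit]
            exact List.getLast_append_of_ne_nil _ (List.cons_ne_nil z l2)
          rw [he]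
          exact List.getLast_mem _
        have hpt0 : p ≠ t0 := fun h => hdisj hpmem (h ▸ ht0z)
        -- leaf properties
        have hdeg2 : ∀ v p' q s, r v p' → r v q → r v s → p' = q ∨ p' = s ∨ q = s := by
          intro v p' q s hp' hq hs
          rcases hp' with hp' | hp' <;> rcases hq with hq | hq <;> rcases hs with hs | hs
          · exact Or.inl (C.proper v p' q _ hp' hq)
          · exact Or.inl (C.proper v p' q _ hp' hq)
          · exact Or.inr (Or.inl (C.proper v p' s _ hp' hs))
          · exact Or.inr (Or.inr (C.proper v q s _ hq hs))
          · exact Or.inr (Or.inr (C.proper v q s _ hq hs))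
          · exact Or.inr (Or.inl (C.proper v p' s _ hp' hs))
          · exact Or.inl (C.proper v p' q _ hp' hq)
          · exact Or.inl (C.proper v p' q _ hp' hq)
        have hleaf : ∀ w, free C w c ∨ free C w b → ∀ p' q, r w p' → r w q → p' = q := by
          intro w hw p' q hp' hq
          rcases hw with hw | hw
          · have hp'' : C.f w p' = some b := by
              rcases hp' with h | h
              · exact absurd h (hw p')
              · exact h
            have hq'' : C.f w q = some b := by
              rcases hq with h | h
              · exact absurd h (hw q)
              · exact h
            exact C.proper w p' q b hp'' hq''
          · have hp'' : C.f w p' = some c := by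
              rcases hp' with h | h
              · exact h
              · exact absurd h (hw p')
            have hq'' : C.f w q = some c := by
              rcases hq with h | h
              · exact h
              · exact absurd h (hw q)
            exact C.proper w p' q c hp'' hq''
        have hexcl : ¬(x ∈ S ∧ p ∈ S) := by
          rintro ⟨hxS, hpS⟩
          exact three_leaves _ r le_rfl hsymr hirr hdeg2 t0 x p (Ne.symm hxt0) hpt0.symm
            hxp (hleaf t0 (Or.inr hb)) (hleaf x (Or.inl hc)) (hleaf p (Or.inr hfpb))
            hxS hpS
        -- transfer of the prefix chain to C₁ (works whether or not x ∈ S)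
        have hfixed : ∀ v, v ≠ z → ∀ a', C.f x v = some a' → C₁.f x v = some a' := by
          intro v hvz a' ha'
          have hac : a' ≠ c := fun h => hc v (h ▸ ha')
          have hab' : a' ≠ b := by
            intro h
            exact hvz (C.proper x v z a' ha' (h ▸ hz))
          by_cases hxS : x ∈ S
          · rw [hC₁, invert_mem C c b S hS v hxS, ha', sw_fixed c b a' hac hab']
          · rw [hC₁, invert_not_mem C c b S hS v hxS]
            exact ha'
        have hfree_other : ∀ u a', a' ≠ c → a' ≠ b → free C u a' → free C₁ u a' := by
          intro u a' hac hab' hfu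
          by_cases huS : u ∈ S
          · rw [hC₁, invert_free_mem C c b S hS hcb a' huS, swc_other c b a' hac hab']
            exact hfu
          · rw [hC₁, invert_free_not_mem C c b S hS a' huS]
            exact hfu
        have hchain₁' : List.Chain (fanRel C₁ x) y t₁ := by
          apply chain_transfer _ _ _ _ hchain₁
          rintro u v hu hv ⟨hadjv, a', ha', hfua'⟩
          have hvz : v ≠ z := fun h => hznt₁ (h ▸ List.mem_cons_of_mem y hv)
          have hac : a' ≠ c := fun h => hc v (h ▸ ha')
          have hab' : a' ≠ b := fun h => hvz (C.proper x v z a' ha' (h ▸ hz))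
          exact ⟨hadjv, a', hfixed v hvz a' ha', hfree_other u a' hac hab' hfua'⟩
        by_cases hpS : p ∈ S
        · -- case (ii): x ∉ S; rotate the prefix fan and color x-p with c
          have hxS : x ∉ S := fun h => hexcl ⟨h, hpS⟩
          have hfxc : free C₁ x c := by
            rw [hC₁, invert_free_not_mem C c b S hS c hxS]
            exact hc
          have hfpc : free C₁ p c := by
            rw [hC₁, invert_free_mem C c b S hS hcb c hpS, swc_c]
            exact hfpb
          obtain ⟨C', hd1, hd2⟩ := finishRotate C₁ x y t₁ hC₁xy h2 hchain₁' hnd₁ c hfxc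
            (by rw [← hp]; exact hfpc)
          exact ⟨C', fun u v hne => hd1 u v (hdom u v hne), hd2⟩
        · by_cases hxS : x ∈ S
          · -- case (iii): rotate the prefix fan and color x-p with b
            have hfxb : free C₁ x b := by
              rw [hC₁, invert_free_mem C c b S hS hcb b hxS, swc_b c b hcb]
              exact hc
            have hfpb' : free C₁ p b := by
              rw [hC₁, invert_free_not_mem C c b S hS b hpS]
              exact hfpb
            obtain ⟨C', hd1, hd2⟩ := finishRotate C₁ x y t₁ hC₁xy h2 hchain₁' hnd₁ b hfxb
              (by rw [← hp]; exact hfpb')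
            exact ⟨C', fun u v hne => hd1 u v (hdom u v hne), hd2⟩
          · -- case (i): full fan; rotate everything and color x-t0 with c
            have hfxc : free C₁ x c := by
              rw [hC₁, invert_free_not_mem C c b S hS c hxS]
              exact hc
            have hft0c : free C₁ t0 c := by
              rw [hC₁, invert_free_mem C c b S hS hcb c ht0S, swc_c]
              exact hb
            have hfanpz' : fanRel C₁ x p z := by
              refine ⟨hadjxz, b, ?_, ?_⟩
              · rw [hC₁, invert_not_mem C c b S hS z hxS]
                exact hz
              · rw [hC₁, invert_free_not_mem C c b S hS b hpS]
                exact hfpb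
            have hchain₂' : List.Chain (fanRel C₁ x) z l2 := by
              apply chain_transfer _ _ _ _ hchain₂
              rintro u v hu hv ⟨hadjv, a', ha', hfua'⟩
              have hvz : v ≠ z := fun h => (List.nodup_cons.mp hnd₂).1 (h ▸ hv)
              have hac : a' ≠ c := fun h => hc v (h ▸ ha')
              have hab' : a' ≠ b := fun h => hvz (C.proper x v z a' ha' (h ▸ hz))
              exact ⟨hadjv, a', hfixed v hvz a' ha', hfree_other u a' hac hab' hfua'⟩
            have hchain' : List.Chain (fanRel C₁ x) y t := by
              rw [hteq]
              apply chain_split'.mpr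
              constructor
              · exact chain_concat _ t₁ y z hchain₁' (by rw [← hp]; exact hfanpz')
              · exact hchain₂'
            obtain ⟨C', hd1, hd2⟩ := finishRotate C₁ x y t hC₁xy h2 hchain' h4 c hfxc
              (by rw [← ht0]; exact hft0c)
            exact ⟨C', fun u v hne => hd1 u v (hdom u v hne), hd2⟩
      · -- z is a new vertex: extend the fan
        have hchain_ext : List.Chain (fanRel C x) y (t ++ [z]) :=
          chain_concat _ t y z h3 ⟨hadjxz, b, hz, hb⟩
        have hnodup_ext : (y :: (t ++ [z])).Nodup := by
          rw [show y :: (t ++ [z]) = (y :: t) ++ [z] from rfl]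
          rw [List.nodup_append']
          refine ⟨h4, List.nodup_singleton z, ?_⟩
          intro w hw hw'
          rw [List.mem_singleton] at hw'
          exact hzmem (hw' ▸ hw)
        have hlen' : Fintype.card V < k + (y :: (t ++ [z])).length := by
          simp only [List.length_cons, List.length_append, List.length_singleton]
          simp only [List.length_cons] at hlen
          omega
        exact ih C y (t ++ [z]) h1 h2 hchain_ext hnodup_ext hlen'

/-! ### Coloring all edges -/

lemma exists_total (hdeg : ∀ v, G.degree v < n) :
    ∃ C : PC G n, ∀ u v, G.Adj u v → C.f u v ≠ none := by
  suffices h : ∀ (k : ℕ) (C : PC G n),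
      ((Finset.univ : Finset (V × V)).filter
        (fun q => G.Adj q.1 q.2 ∧ C.f q.1 q.2 = none)).card ≤ k →
      ∃ C' : PC G n, ∀ u v, G.Adj u v → C'.f u v ≠ none by
    set C₀ : PC G n :=
      ⟨fun _ _ => none, fun _ _ => rfl, fun u v h => absurd rfl h,
        fun _ _ _ _ h _ => nomatch h⟩ with hC₀
    exact h _ C₀ le_rfl
  intro k
  induction k with
  | zero =>
    intro C hcard
    refine ⟨C, fun u v hadj hnone => ?_⟩
    have hmem : (u, v) ∈ (Finset.univ : Finset (V × V)).filter
        (fun q => G.Adj q.1 q.2 ∧ C.f q.1 q.2 = none) := by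
      simp [hadj, hnone]
    have := Finset.card_pos.mpr ⟨_, hmem⟩
    omega
  | succ k ih =>
    intro C hcard
    by_cases hall : ∀ u v, G.Adj u v → C.f u v ≠ none
    · exact ⟨C, hall⟩
    · push_neg at hall
      obtain ⟨x, y, hadj, hnone⟩ := hall
      obtain ⟨C', hd1, hd2⟩ := build hdeg x (Fintype.card V) C y [] hnone hadj
        List.Chain.nil (List.nodup_singleton y) (by simp)
      apply ih C'
      have hss : ((Finset.univ : Finset (V × V)).filter
            (fun q => G.Adj q.1 q.2 ∧ C'.f q.1 q.2 = none)) ⊂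
          ((Finset.univ : Finset (V × V)).filter
            (fun q => G.Adj q.1 q.2 ∧ C.f q.1 q.2 = none)) := by
        constructor
        · intro q hq
          simp only [Finset.mem_filter] at hq ⊢
          refine ⟨hq.1, hq.2.1, ?_⟩
          by_contra hne
          exact (hd1 q.1 q.2 hne) hq.2.2
        · intro hsub
          have hmem : (x, y) ∈ (Finset.univ : Finset (V × V)).filter
              (fun q => G.Adj q.1 q.2 ∧ C.f q.1 q.2 = none) := by
            simp [hadj, hnone]
          have := hsub hmem
          simp only [Finset.mem_filter] at this
          exact hd2 this.2.2
      have := Finset.card_lt_card hss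
      omega

end Vizing

/-- Vizing's theorem: every finite simple graph with maximum degree
d admits a proper edge-coloring using at most d+1 colors. -/
theorem stmt_16 {V : Type*} [Fintype V] [DecidableEq V] (G : SimpleGraph V)
    [DecidableRel G.Adj] (d : ℕ) (hd : ∀ v, G.degree v ≤ d) :
    ∃ c : Sym2 V → Fin (d + 1),
      ∀ u v w : V, G.Adj u v → G.Adj u w → v ≠ w → c s(u, v) ≠ c s(u, w) := by
  have hdeg : ∀ v, G.degree v < d + 1 := fun v => Nat.lt_succ_of_le (hd v)
  obtain ⟨C, htot⟩ := Vizing.exists_total (G := G) (n := d + 1) hdeg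
  refine ⟨Sym2.lift ⟨fun u v => (C.f u v).getD ⟨0, Nat.succ_pos d⟩, fun u v => ?_⟩, ?_⟩
  · dsimp only
    rw [C.symm]
  intro u v w huv huw hvw heq
  obtain ⟨a, ha⟩ := Option.ne_none_iff_exists'.mp (htot u v huv)
  obtain ⟨a', ha'⟩ := Option.ne_none_iff_exists'.mp (htot u w huw)
  simp only [Sym2.lift_mk, ha, ha', Option.getD_some] at heq
  exact hvw (C.proper u v w a ha (by rw [ha', heq]))
end

section
/- Let G be a simple graph with maximum degree d, partially properly edge-colored with colors {1,...,d+1}, and let (α, v, x₀, x₁, ..., x_k) be a c-fan with c(v xᵢ) = βᵢ for 1 ≤ i ≤ k. For any 0 ≤ j ≤ k, the 'shift from x_j' operation—setting c(v x_{i-1}) := β_i for i = 1,...,j and uncoloring v x_j—produces a partial proper edge-coloring in which the edge v x_j is uncolored, the set of missing colors at v is unchanged, and (α, v, x_j, x_{j+1}, ..., x_k) is again a c-fan. -/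
/-- Color `γ` is missing at vertex `u`: no colored edge incident to `u` has color `γ`. -/
def MissingAt {V : Type*} {N : ℕ} (G : SimpleGraph V) (c : Sym2 V → Option (Fin N))
    (γ : Fin N) (u : V) : Prop :=
  ∀ w, G.Adj u w → c s(u, w) ≠ some γ

/-- Shifting a c-fan (α, v, x₀, …, x_k) from x_j (recoloring
v x_{i-1} with β_i for 1 ≤ i ≤ j and uncoloring v x_j) produces a partial proper
edge-coloring in which v x_j is uncolored, the missing colors at v are unchanged,
and (α, v, x_j, …, x_k) is again a c-fan. -/
theorem stmt_18 {V : Type*} (G : SimpleGraph V) (d : ℕ)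
    (c : Sym2 V → Option (Fin (d + 1)))
    (hproper : ∀ u w w' : V, G.Adj u w → G.Adj u w' → w ≠ w' →
      ∀ γ, c s(u, w) = some γ → c s(u, w') ≠ some γ)
    (α : Fin (d + 1)) (v : V) (k : ℕ) (x : ℕ → V) (β : ℕ → Fin (d + 1))
    (hαv : MissingAt G c α v)
    (hadj : ∀ i, i ≤ k → G.Adj v (x i))
    (hinj : ∀ i j, i ≤ k → j ≤ k → i ≠ j → x i ≠ x j)
    (h0 : c s(v, x 0) = none)
    (hcol : ∀ i, 1 ≤ i → i ≤ k → c s(v, x i) = some (β i))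
    (hmiss : ∀ i, 1 ≤ i → i ≤ k → MissingAt G c (β i) (x (i - 1)))
    (j : ℕ) (hj : j ≤ k)
    (c' : Sym2 V → Option (Fin (d + 1)))
    (hs1 : ∀ i, 1 ≤ i → i ≤ j → c' s(v, x (i - 1)) = some (β i))
    (hs2 : c' s(v, x j) = none)
    (hs3 : ∀ e : Sym2 V, (∀ i, i ≤ j → e ≠ s(v, x i)) → c' e = c e) :
    (∀ u w w' : V, G.Adj u w → G.Adj u w' → w ≠ w' →
      ∀ γ, c' s(u, w) = some γ → c' s(u, w') ≠ some γ) ∧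
    c' s(v, x j) = none ∧
    (∀ γ : Fin (d + 1), MissingAt G c γ v ↔ MissingAt G c' γ v) ∧
    (∀ i, j < i → i ≤ k → c' s(v, x i) = some (β i)) ∧
    (∀ i, j < i → i ≤ k → MissingAt G c' (β i) (x (i - 1))) ∧
    MissingAt G c' α v := by
  have hvx : ∀ m, m ≤ k → v ≠ x m := fun m hm => (hadj m hm).ne
  have hβne : ∀ m m', 1 ≤ m → m ≤ k → 1 ≤ m' → m' ≤ k → m ≠ m' →
      (β m : Fin (d + 1)) ≠ β m' := by
    intro m m' h1 h2 h1' h2' hne heq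
    exact hproper v (x m) (x m') (hadj m h2) (hadj m' h2')
      (hinj m m' h2 h2' hne) (β m) (hcol m h1 h2) (heq ▸ hcol m' h1' h2')
  -- classification of edges under c'
  have hclass : ∀ e : Sym2 V,
      ((∀ i, i ≤ j → e ≠ s(v, x i)) ∧ c' e = c e) ∨
      (∃ m, m < j ∧ e = s(v, x m) ∧ c' e = some (β (m + 1))) ∨
      (e = s(v, x j) ∧ c' e = none) := by
    intro e
    by_cases h : ∀ i, i ≤ j → e ≠ s(v, x i)
    · exact Or.inl ⟨h, hs3 e h⟩
    · push_neg at h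
      obtain ⟨m, hm, he⟩ := h
      rcases Nat.lt_or_ge m j with hlt | hge
      · refine Or.inr (Or.inl ⟨m, hlt, he, ?_⟩)
        have := hs1 (m + 1) (by omega) (by omega)
        simpa [he] using this
      · have hmj : m = j := le_antisymm hm hge
        subst hmj
        exact Or.inr (Or.inr ⟨he, by rw [he]; exact hs2⟩)
  -- mixed case for properness
  have hBA : ∀ u w w' : V, G.Adj u w → G.Adj u w' → w ≠ w' → ∀ γ : Fin (d + 1),
      (∃ m, m < j ∧ s(u, w) = s(v, x m) ∧ c' s(u, w) = some (β (m + 1))) →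
      ((∀ i, i ≤ j → s(u, w') ≠ s(v, x i)) ∧ c' s(u, w') = c s(u, w')) →
      c' s(u, w) = some γ → c' s(u, w') = some γ → False := by
    intro u w w' haw haw' hww' γ hB hA h1 h2
    obtain ⟨m, hmj, he, hval⟩ := hB
    have hγ : γ = β (m + 1) := Option.some.inj (h1.symm.trans hval)
    have h2' : c s(u, w') = some γ := hA.2.symm.trans h2
    rcases Sym2.eq_iff.mp he with ⟨huv, hwx⟩ | ⟨hux, hwv⟩
    · rw [huv] at h2' haw'
      have hwx' : w' ≠ x (m + 1) := by
        intro h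
        exact hA.1 (m + 1) (by omega) (by rw [h, huv])
      exact hproper v (x (m + 1)) w' (hadj (m + 1) (by omega)) haw'
        (fun h => hwx' h.symm) γ
        (by rw [hγ]; exact hcol (m + 1) (by omega) (by omega)) h2'
    · rw [hux] at h2' haw'
      have hm' := hmiss (m + 1) (by omega) (by omega)
      simp only [Nat.add_sub_cancel] at hm'
      rw [hγ] at h2'
      exact hm' w' haw' h2'
  have hproper' : ∀ u w w' : V, G.Adj u w → G.Adj u w' → w ≠ w' →
      ∀ γ, c' s(u, w) = some γ → c' s(u, w') ≠ some γ := by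
    intro u w w' haw haw' hww' γ h1 h2
    rcases hclass s(u, w) with hA1 | hB1 | ⟨_, hC1⟩
    · rcases hclass s(u, w') with hA2 | hB2 | ⟨_, hC2⟩
      · exact hproper u w w' haw haw' hww' γ (hA1.2.symm.trans h1) (hA2.2.symm.trans h2)
      · exact hBA u w' w haw' haw (Ne.symm hww') γ hB2 hA1 h2 h1
      · rw [hC2] at h2; exact nomatch h2
    · rcases hclass s(u, w') with hA2 | hB2 | ⟨_, hC2⟩
      · exact hBA u w w' haw haw' hww' γ hB1 hA2 h1 h2
      · obtain ⟨m, hmj, he, hval⟩ := hB1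
        obtain ⟨m', hmj', he', hval'⟩ := hB2
        by_cases hmm : m = m'
        · subst hmm
          have heq : s(u, w) = s(u, w') := he.trans he'.symm
          rcases Sym2.eq_iff.mp heq with ⟨_, h⟩ | ⟨ha, hb⟩
          · exact hww' h
          · exact hww' (hb.trans ha)
        · have hγ1 : γ = β (m + 1) := Option.some.inj (h1.symm.trans hval)
          have hγ2 : γ = β (m' + 1) := Option.some.inj (h2.symm.trans hval')
          exact hβne (m + 1) (m' + 1) (by omega) (by omega) (by omega) (by omega)
            (by omega) (hγ1.symm.trans hγ2)
      · rw [hC2] at h2; exact nomatch h2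
    · rw [hC1] at h1; exact nomatch h1
  have hmissv : ∀ γ : Fin (d + 1), MissingAt G c γ v ↔ MissingAt G c' γ v := by
    intro γ
    constructor
    · intro h w hw hcw
      rcases hclass s(v, w) with hA | ⟨m, hmj, he, hval⟩ | ⟨_, hC⟩
      · exact h w hw (hA.2.symm.trans hcw)
      · have hγ : γ = β (m + 1) := Option.some.inj (hcw.symm.trans hval)
        exact h (x (m + 1)) (hadj (m + 1) (by omega))
          (by rw [hγ]; exact hcol (m + 1) (by omega) (by omega))
      · rw [hC] at hcw; exact nomatch hcw
    · intro h w hw hcw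
      by_cases hwx : ∃ m, m ≤ j ∧ w = x m
      · obtain ⟨m, hm, rfl⟩ := hwx
        rcases Nat.eq_zero_or_pos m with rfl | hm0
        · rw [h0] at hcw; exact nomatch hcw
        · have hγ : γ = β m := by
            have := hcol m hm0 (by omega)
            rw [hcw] at this; exact Option.some.inj this
          exact h (x (m - 1)) (hadj (m - 1) (by omega))
            (by rw [hγ]; exact hs1 m hm0 hm)
      · push_neg at hwx
        have hne : ∀ i, i ≤ j → s(v, w) ≠ s(v, x i) := by
          intro i hi heq
          rcases Sym2.eq_iff.mp heq with ⟨_, h2⟩ | ⟨h1', _⟩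
          · exact hwx i hi h2
          · exact hvx i (by omega) h1'
        exact h w hw ((hs3 _ hne).trans hcw)
  have h4 : ∀ i, j < i → i ≤ k → c' s(v, x i) = some (β i) := by
    intro i hji hik
    have hne : ∀ m, m ≤ j → s(v, x i) ≠ s(v, x m) := by
      intro m hm heq
      rcases Sym2.eq_iff.mp heq with ⟨_, h2⟩ | ⟨h1', _⟩
      · exact hinj i m hik (by omega) (by omega) h2
      · exact hvx m (by omega) h1'
    rw [hs3 _ hne]; exact hcol i (by omega) hik
  have h5 : ∀ i, j < i → i ≤ k → MissingAt G c' (β i) (x (i - 1)) := by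
    intro i hji hik w hw hcw
    rcases hclass s(x (i - 1), w) with hA | ⟨m, hmj, he, hval⟩ | ⟨_, hC⟩
    · exact hmiss i (by omega) hik w hw (hA.2.symm.trans hcw)
    · have heq : β i = β (m + 1) := by
        rw [hcw] at hval; exact Option.some.inj hval
      exact hβne i (m + 1) (by omega) hik (by omega) (by omega) (by omega) heq
    · rw [hC] at hcw; exact nomatch hcw
  exact ⟨hproper', hs2, hmissv, h4, h5, (hmissv α).mp hαv⟩
end

section
/- Let G be a simple graph with maximum degree d, partially properly edge-colored with colors {1,...,d+1}, and let F = (α, v, x₁, ..., x_k) be a u-fan with k ≥ 2. If x is any leaf of F, then coloring the edge v x with α yields a valid partial proper edge-coloring, provided α is missing at v at that moment; moreover, if α is not missing at v but some color β is missing at v, then after flipping the maximal αβ-path starting at v, the color α becomes missing at v, and at most one leaf of F loses the property that α is missing at it (namely, the leaf at the far endpoint of the flipped path, if any), so a leaf x with α missing at both v and x still exists and v x can be properly colored α. -/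
open scoped Classical

/-- Swap the colors α and β on an optional color. -/
def swapCol {N : ℕ} (α β : Fin N) (o : Option (Fin N)) : Option (Fin N) :=
  if o = some α then some β else if o = some β then some α else o

lemma swapCol_some {N : ℕ} (α β γ : Fin N) :
    ∃ δ, swapCol α β (some γ) = some δ := by
  unfold swapCol; split_ifs <;> exact ⟨_, rfl⟩

lemma swapCol_invol {N : ℕ} {α β : Fin N} (h : α ≠ β) (o : Option (Fin N)) :
    swapCol α β (swapCol α β o) = o := by
  unfold swapCol
  split_ifs <;> simp_all

lemma swapCol_eq_some_left {N : ℕ} {α β : Fin N} (h : α ≠ β) (o : Option (Fin N)) :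
    swapCol α β o = some α ↔ o = some β := by
  unfold swapCol
  split_ifs with h1 h2
  · simp [h1, h.symm, h]
  · simp [h2]
  · simp [h1, h2]

open SimpleGraph in
lemma aux_walk {V : Type*} {H : SimpleGraph V}
    (hdeg2 : ∀ u w1 w2 w3, H.Adj u w1 → H.Adj u w2 → H.Adj u w3 →
      w1 = w2 ∨ w2 = w3 ∨ w1 = w3) :
    ∀ {w xx : V} (p : H.Walk w xx) {y : V} (q : H.Walk w y) (z : V),
      H.Adj w z → p.IsPath → q.IsPath → z ∉ p.support → z ∉ q.support →
      xx ∈ q.support ∨ y ∈ p.support := by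
  intro w xx p
  induction p with
  | nil =>
    intro y q z _ _ _ _ _
    left; exact q.start_mem_support
  | @cons w u xx hadj p ih =>
    intro y q z hz hp hq hzp hzq
    cases q with
    | nil => right; exact Walk.start_mem_support _
    | @cons _ u' _ hadj' q' =>
      rw [Walk.support_cons] at hzp hzq
      have huz : u ≠ z := fun h => hzp (by rw [← h]; exact List.mem_cons_of_mem _ p.start_mem_support)
      have hu'z : u' ≠ z := fun h =>
        hzq (by rw [← h]; exact List.mem_cons_of_mem _ q'.start_mem_support)
      have huu' : u = u' := by
        rcases hdeg2 w u u' z hadj hadj' hz with h | h | h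
        · exact h
        · exact absurd h hu'z
        · exact absurd h huz
      subst huu'
      have hwp : w ∉ p.support := ((Walk.cons_isPath_iff _ _).1 hp).2
      have hwq : w ∉ q'.support := ((Walk.cons_isPath_iff _ _).1 hq).2
      rcases ih q' w hadj.symm hp.of_cons hq.of_cons hwp hwq with h | h
      · left; rw [Walk.support_cons]; exact List.mem_cons_of_mem _ h
      · right; rw [Walk.support_cons]; exact List.mem_cons_of_mem _ h

open SimpleGraph in
lemma internal_two {V : Type*} {H : SimpleGraph V} {v b a : V} (q : H.Walk v b)
    (hq : q.IsPath) (hmem : a ∈ q.support) (hav : a ≠ v) (hab : a ≠ b) :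
    ∃ w1 w2, w1 ≠ w2 ∧ H.Adj a w1 ∧ H.Adj a w2 := by
  classical
  have hspec := q.take_spec hmem
  have hnodup : ((q.takeUntil a hmem).append (q.dropUntil a hmem)).support.Nodup := by
    rw [hspec]; exact hq.support_nodup
  rw [Walk.support_append, List.nodup_append] at hnodup
  obtain ⟨-, -, hdisj⟩ := hnodup
  have h1nil : ¬ (q.takeUntil a hmem).reverse.Nil := Walk.not_nil_of_ne hav
  rw [Walk.not_nil_iff] at h1nil
  obtain ⟨w1, h1, r1, hr1⟩ := h1nil
  have hw1 : w1 ∈ (q.takeUntil a hmem).support := by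
    have hmem1 : w1 ∈ (q.takeUntil a hmem).reverse.support := by
      rw [hr1, Walk.support_cons]
      exact List.mem_cons_of_mem _ r1.start_mem_support
    rwa [Walk.support_reverse, List.mem_reverse] at hmem1
  have h2nil : ¬ (q.dropUntil a hmem).Nil := Walk.not_nil_of_ne hab
  rw [Walk.not_nil_iff] at h2nil
  obtain ⟨w2, h2, r2, hr2⟩ := h2nil
  have hw2 : w2 ∈ (q.dropUntil a hmem).support.tail := by
    rw [hr2, Walk.support_cons]
    exact r2.start_mem_support
  exact ⟨w1, w2, fun h => hdisj w1 hw1 w2 hw2 h, h1, h2⟩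

open SimpleGraph in
lemma three_lemma {V : Type*} {H : SimpleGraph V}
    (hdeg2 : ∀ u w1 w2 w3, H.Adj u w1 → H.Adj u w2 → H.Adj u w3 →
      w1 = w2 ∨ w2 = w3 ∨ w1 = w3)
    {v a b : V}
    (hv : ∀ w1 w2, H.Adj v w1 → H.Adj v w2 → w1 = w2)
    (ha : ∀ w1 w2, H.Adj a w1 → H.Adj a w2 → w1 = w2)
    (hb : ∀ w1 w2, H.Adj b w1 → H.Adj b w2 → w1 = w2)
    (hab : a ≠ b) (hav : a ≠ v) (hbv : b ≠ v)
    (hra : H.Reachable v a) (hrb : H.Reachable v b) : False := by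
  classical
  obtain ⟨p0⟩ := hra
  obtain ⟨q0⟩ := hrb
  obtain ⟨p, hp⟩ := p0.toPath
  obtain ⟨q, hq⟩ := q0.toPath
  cases p with
  | nil => exact hav rfl
  | @cons _ u _ h1 p1 =>
    cases q with
    | nil => exact hbv rfl
    | @cons _ u' _ h2 q1 =>
      have huu' : u = u' := hv u u' h1 h2
      subst huu'
      have hvp1 : v ∉ p1.support := ((Walk.cons_isPath_iff _ _).1 hp).2
      have hvq1 : v ∉ q1.support := ((Walk.cons_isPath_iff _ _).1 hq).2
      rcases aux_walk hdeg2 p1 q1 v h1.symm hp.of_cons hq.of_cons hvp1 hvq1 with h | h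
      · have hmem : a ∈ (Walk.cons h2 q1).support := by
          rw [Walk.support_cons]; exact List.mem_cons_of_mem _ h
        obtain ⟨w1, w2, hne, ha1, ha2⟩ := internal_two (Walk.cons h2 q1) hq hmem hav hab
        exact hne (ha w1 w2 ha1 ha2)
      · have hmem : b ∈ (Walk.cons h1 p1).support := by
          rw [Walk.support_cons]; exact List.mem_cons_of_mem _ h
        obtain ⟨w1, w2, hne, hb1, hb2⟩ :=
          internal_two (Walk.cons h1 p1) hp hmem hbv (Ne.symm hab)
        exact hne (hb w1 w2 hb1 hb2)

/-- Activating a u-fan (α, v, x₁, …, x_k), k ≥ 2.  If β is missing at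
the center v (and α is not), then after flipping the maximal αβ-path starting at v
(i.e. swapping α and β on the component of v in the αβ-subgraph), α becomes
missing at v, at most one leaf loses the property that α is missing at it, and
hence some leaf xᵢ has α missing at both v and xᵢ, so coloring v xᵢ with α yields
a proper partial coloring. -/
theorem stmt_19 {V : Type*} (G : SimpleGraph V) (d : ℕ)
    (c : Sym2 V → Option (Fin (d + 1)))
    (hproper : ∀ u w w' : V, G.Adj u w → G.Adj u w' → w ≠ w' →
      ∀ γ, c s(u, w) = some γ → c s(u, w') ≠ some γ)
    (α β : Fin (d + 1)) (v : V) (k : ℕ) (x : ℕ → V) (hk : 2 ≤ k)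
    (hadj : ∀ i, 1 ≤ i → i ≤ k → G.Adj v (x i))
    (hinj : ∀ i j, 1 ≤ i → i ≤ k → 1 ≤ j → j ≤ k → i ≠ j → x i ≠ x j)
    (huncol : ∀ i, 1 ≤ i → i ≤ k → c s(v, x i) = none)
    (hleaf : ∀ i, 1 ≤ i → i ≤ k → MissingAt G c α (x i))
    (hcenter : ¬ MissingAt G c α v)
    (hβv : MissingAt G c β v)
    (P : Set V) (hPdef : P = {w | (twoColored G c α β).Reachable v w})
    (c' : Sym2 V → Option (Fin (d + 1)))
    (hc' : ∀ e, c' e =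
      if (∃ u ∈ P, u ∈ e) ∧ c e = some α then some β
      else if (∃ u ∈ P, u ∈ e) ∧ c e = some β then some α
      else c e) :
    MissingAt G c' α v ∧
    (∀ i j, 1 ≤ i → i ≤ k → 1 ≤ j → j ≤ k →
      ¬ MissingAt G c' α (x i) → ¬ MissingAt G c' α (x j) → i = j) ∧
    (∃ i, 1 ≤ i ∧ i ≤ k ∧ MissingAt G c' α (x i) ∧
      ∀ u w w' : V, G.Adj u w → G.Adj u w' → w ≠ w' → ∀ γ,
        (if s(u, w) = s(v, x i) then some α else c' s(u, w)) = some γ →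
        (if s(u, w') = s(v, x i) then some α else c' s(u, w')) ≠ some γ) := by
  have hαβ : α ≠ β := fun h => hcenter (h ▸ hβv)
  have hvP : v ∈ P := by rw [hPdef]; exact SimpleGraph.Reachable.refl v
  have hclosed : ∀ u u' : V, u ∈ P → (twoColored G c α β).Adj u u' → u' ∈ P := by
    intro u u' hu hadj'
    rw [hPdef] at hu ⊢
    exact hu.trans hadj'.reachable
  have hc'in : ∀ u w : V, u ∈ P → c' s(u, w) = swapCol α β (c s(u, w)) := by
    intro u w hu
    have hmem : ∃ t ∈ P, t ∈ s(u, w) := ⟨u, hu, Sym2.mem_iff.2 (Or.inl rfl)⟩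
    rw [hc']
    by_cases h1 : c s(u, w) = some α
    · rw [if_pos ⟨hmem, h1⟩, h1]
      simp [swapCol]
    · by_cases h2 : c s(u, w) = some β
      · rw [if_neg (fun h => h1 h.2), if_pos ⟨hmem, h2⟩, h2]
        simp [swapCol, Ne.symm hαβ]
      · rw [if_neg (fun h => h1 h.2), if_neg (fun h => h2 h.2)]
        simp [swapCol, h1, h2]
  have hc'out : ∀ u w : V, G.Adj u w → u ∉ P → c' s(u, w) = c s(u, w) := by
    intro u w hgw hu
    have hmem : ∀ (_ : c s(u, w) = some α ∨ c s(u, w) = some β),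
        ¬ ∃ t ∈ P, t ∈ s(u, w) := by
      rintro h ⟨t, htP, hts⟩
      rcases Sym2.mem_iff.1 hts with rfl | rfl
      · exact hu htP
      · refine hu (hclosed t u htP ⟨hgw.symm, ?_⟩)
        rwa [Sym2.eq_swap]
    rw [hc', if_neg (fun hcond => hmem (Or.inl hcond.2) hcond.1),
      if_neg (fun hcond => hmem (Or.inr hcond.2) hcond.1)]
  -- Part 1 : α is missing at v after the flip
  have hpart1 : MissingAt G c' α v := by
    intro w hw hcol
    rw [hc'in v w hvP, swapCol_eq_some_left hαβ] at hcol
    exact hβv w hw hcol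
  -- properness of c'
  have hproper' : ∀ u w w' : V, G.Adj u w → G.Adj u w' → w ≠ w' →
      ∀ γ, c' s(u, w) = some γ → c' s(u, w') ≠ some γ := by
    intro u w w' h h' hne γ e1 e2
    by_cases hu : u ∈ P
    · rw [hc'in u w hu] at e1
      rw [hc'in u w' hu] at e2
      obtain ⟨δ, hδ⟩ := swapCol_some α β γ
      have e1' : c s(u, w) = some δ := by
        have h3 := congrArg (swapCol α β) e1
        rwa [swapCol_invol hαβ, hδ] at h3
      have e2' : c s(u, w') = some δ := by
        have h3 := congrArg (swapCol α β) e2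
        rwa [swapCol_invol hαβ, hδ] at h3
      exact hproper u w w' h h' hne δ e1' e2'
    · rw [hc'out u w h hu] at e1
      rw [hc'out u w' h' hu] at e2
      exact hproper u w w' h h' hne γ e1 e2
  -- degree bounds in the two-colored graph
  have hdeg2 : ∀ u w1 w2 w3, (twoColored G c α β).Adj u w1 → (twoColored G c α β).Adj u w2 →
      (twoColored G c α β).Adj u w3 → w1 = w2 ∨ w2 = w3 ∨ w1 = w3 := by
    intro u w1 w2 w3 h1 h2 h3
    by_contra hcon
    push_neg at hcon
    obtain ⟨h12, h23, h13⟩ := hcon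
    obtain ⟨hg1, hc1⟩ := h1
    obtain ⟨hg2, hc2⟩ := h2
    obtain ⟨hg3, hc3⟩ := h3
    rcases hc1 with e1 | e1 <;> rcases hc2 with e2 | e2 <;> rcases hc3 with e3 | e3
    all_goals first
      | exact hproper u w1 w2 hg1 hg2 h12 _ e1 e2
      | exact hproper u w2 w3 hg2 hg3 h23 _ e2 e3
      | exact hproper u w1 w3 hg1 hg3 h13 _ e1 e3
  have honev : ∀ w1 w2, (twoColored G c α β).Adj v w1 → (twoColored G c α β).Adj v w2 →
      w1 = w2 := by
    intro w1 w2 h1 h2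
    obtain ⟨hg1, hc1⟩ := h1
    obtain ⟨hg2, hc2⟩ := h2
    have e1 : c s(v, w1) = some α := hc1.resolve_right (hβv w1 hg1)
    have e2 : c s(v, w2) = some α := hc2.resolve_right (hβv w2 hg2)
    by_contra hne
    exact hproper v w1 w2 hg1 hg2 hne α e1 e2
  have honeleaf : ∀ i, 1 ≤ i → i ≤ k → ∀ w1 w2, (twoColored G c α β).Adj (x i) w1 →
      (twoColored G c α β).Adj (x i) w2 → w1 = w2 := by
    intro i hi1 hik w1 w2 h1 h2
    obtain ⟨hg1, hc1⟩ := h1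
    obtain ⟨hg2, hc2⟩ := h2
    have e1 : c s(x i, w1) = some β := hc1.resolve_left (hleaf i hi1 hik w1 hg1)
    have e2 : c s(x i, w2) = some β := hc2.resolve_left (hleaf i hi1 hik w2 hg2)
    by_contra hne
    exact hproper (x i) w1 w2 hg1 hg2 hne β e1 e2
  have hreach : ∀ i, 1 ≤ i → i ≤ k → ¬ MissingAt G c' α (x i) →
      (twoColored G c α β).Reachable v (x i) := by
    intro i hi1 hik hni
    rw [MissingAt] at hni
    push_neg at hni
    obtain ⟨w, hw, hcw⟩ := hni
    by_contra hnr
    have hxP : x i ∉ P := by rw [hPdef]; exact hnr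
    rw [hc'out (x i) w hw hxP] at hcw
    exact hleaf i hi1 hik w hw hcw
  -- Part 2 : at most one leaf loses the property
  have hpart2 : ∀ i j, 1 ≤ i → i ≤ k → 1 ≤ j → j ≤ k →
      ¬ MissingAt G c' α (x i) → ¬ MissingAt G c' α (x j) → i = j := by
    intro i j hi1 hik hj1 hjk hni hnj
    by_contra hij
    exact three_lemma hdeg2 honev (honeleaf i hi1 hik) (honeleaf j hj1 hjk)
      (hinj i j hi1 hik hj1 hjk hij) (hadj i hi1 hik).ne' (hadj j hj1 hjk).ne'
      (hreach i hi1 hik hni) (hreach j hj1 hjk hnj)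
  -- Part 3 : a good leaf exists
  have h1k : 1 ≤ k := le_trans one_le_two hk
  have hgood : ∃ i, 1 ≤ i ∧ i ≤ k ∧ MissingAt G c' α (x i) := by
    by_cases h1 : MissingAt G c' α (x 1)
    · exact ⟨1, le_refl 1, h1k, h1⟩
    · by_cases h2 : MissingAt G c' α (x 2)
      · exact ⟨2, one_le_two, hk, h2⟩
      · exact absurd (hpart2 1 2 (le_refl 1) h1k one_le_two hk h1 h2) (by norm_num)
  obtain ⟨i, hi1, hik, hmi⟩ := hgood
  refine ⟨hpart1, hpart2, i, hi1, hik, hmi, ?_⟩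
  intro u w w' huw huw' hne γ e1 e2
  by_cases h1 : s(u, w) = s(v, x i) <;> by_cases h2 : s(u, w') = s(v, x i)
  · exact hne (Sym2.congr_right.mp (h1.trans h2.symm))
  · rw [if_pos h1] at e1
    rw [if_neg h2] at e2
    have hγ : γ = α := (Option.some_inj.mp e1).symm
    subst hγ
    rcases Sym2.eq_iff.mp h1 with ⟨rfl, rfl⟩ | ⟨rfl, rfl⟩
    · exact hpart1 w' huw' e2
    · exact hmi w' huw' e2
  · rw [if_neg h1] at e1
    rw [if_pos h2] at e2
    have hγ : γ = α := (Option.some_inj.mp e2).symm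
    subst hγ
    rcases Sym2.eq_iff.mp h2 with ⟨rfl, rfl⟩ | ⟨rfl, rfl⟩
    · exact hpart1 w huw e1
    · exact hmi w huw e1
  · rw [if_neg h1] at e1
    rw [if_neg h2] at e2
    exact hproper' u w w' huw huw' hne γ e1 e2
end
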